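/- Let n ≥ 1 and let 0 ≤ i_1 < i_2 < … < i_n < s be integers. Then ∫ P_{2^{i_1}} P_{2^{i_2}} ⋯ P_{2^{i_n}} dν_s = (∫ P_{2^{i_1}} dν_s)(∫ P_{2^{i_2}} dν_s)⋯(∫ P_{2^{i_n}} dν_s) = (−1)^n ∏_{k=1}^n (r_{i_k}/2). -/

import Mathlib

open Polynomial

/-- `r γ s` : the recursively defined scales `r 0 = 1`, `r (s+1) = γ (s+1) * (r s)²`. -/
noncomputable def r (γ : ℕ → ℝ) : ℕ → ℝ
  | 0 => 1
  | s + 1 => γ (s + 1) * (r γ s) ^ 2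

/-- `P γ s` : the polynomial `P_{2^s}`, with `P_1 = X - 1` and
`P_{2^{s+1}} = P_{2^s} · (P_{2^s} + r_s)`. -/
noncomputable def P (γ : ℕ → ℝ) : ℕ → Polynomial ℝ
  | 0 => X - 1
  | s + 1 => P γ s * (P γ s + C (r γ s))

/-- The integral `∫ f dν_s` of a function `f` against the normalized counting measure `ν_s`
on the `2^s` (simple, real) zeros of `P_{2^s} + r_s/2`. -/
noncomputable def nuInt (γ : ℕ → ℝ) (s : ℕ) (f : ℝ → ℝ) : ℝ :=
  (((P γ s + C (r γ s / 2)).roots.map f).sum) / 2 ^ s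

/-- Upper bound for admissible shifts `c`. -/
noncomputable def B (γ : ℕ → ℝ) : ℕ → ℝ
  | 0 => 1
  | s + 1 => (r γ s) ^ 2 / 4

lemma rpos (γ : ℕ → ℝ) (hγ : ∀ s : ℕ, 0 < γ (s + 1) ∧ γ (s + 1) < 1 / 4) (s : ℕ) :
    0 < r γ s := by
  induction s with
  | zero => simp [r]
  | succ s ih =>
    have := (hγ s).1
    simp only [r]
    positivity

lemma rleB (γ : ℕ → ℝ) (hγ : ∀ s : ℕ, 0 < γ (s + 1) ∧ γ (s + 1) < 1 / 4) (s : ℕ) :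
    r γ s ≤ B γ s := by
  cases s with
  | zero => simp [r, B]
  | succ s =>
    have h1 := (hγ s).2
    have h2 := rpos γ hγ s
    simp only [r, B]
    nlinarith

lemma Pmonic_deg (γ : ℕ → ℝ) (s : ℕ) : (P γ s).Monic ∧ (P γ s).natDegree = 2 ^ s := by
  induction s with
  | zero =>
    have h : (P γ 0) = X - C 1 := by simp [P]
    rw [h]
    exact ⟨monic_X_sub_C 1, natDegree_X_sub_C 1⟩
  | succ s ih =>
    obtain ⟨hm, hd⟩ := ih
    have hpos : 0 < (P γ s).natDegree := by rw [hd]; positivity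
    have hm2 : (P γ s + C (r γ s)).Monic := by
      apply hm.add_of_left
      apply lt_of_le_of_lt (degree_C_le)
      rw [degree_eq_natDegree hm.ne_zero]
      exact_mod_cast hpos
    constructor
    · exact hm.mul hm2
    · simp only [P]
      rw [natDegree_mul hm.ne_zero hm2.ne_zero, natDegree_add_C, hd]
      ring

lemma PCmonic (γ : ℕ → ℝ) (s : ℕ) (c : ℝ) : (P γ s + C c).Monic := by
  obtain ⟨hm, hd⟩ := Pmonic_deg γ s
  apply hm.add_of_left
  apply lt_of_le_of_lt (degree_C_le)
  rw [degree_eq_natDegree hm.ne_zero, hd]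
  exact_mod_cast pow_pos (by norm_num : (0:ℕ) < 2) s

lemma key (γ : ℕ → ℝ) (hγ : ∀ s : ℕ, 0 < γ (s + 1) ∧ γ (s + 1) < 1 / 4) :
    ∀ s : ℕ, ∀ T : Finset ℕ, (∀ j ∈ T, j < s) → ∀ c : ℝ, 0 < c → c < B γ s →
    (((P γ s + C c).roots.map (fun x => ∏ j ∈ T, (P γ j).eval x)).sum)
      = 2 ^ s * ∏ j ∈ T, (-(r γ j) / 2) := by
  intro s
  induction s with
  | zero =>
    intro T hT c hc hcB
    have hTe : T = ∅ := Finset.eq_empty_of_forall_notMem (fun j hj => Nat.not_lt_zero j (hT j hj))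
    subst hTe
    have h : P γ 0 + C c = X - C (1 - c) := by
      simp only [P]
      rw [C_sub, C_1]
      ring
    rw [h, roots_X_sub_C]
    simp
  | succ s ih =>
    intro T hT c hc hcB
    set R := r γ s with hR
    have hRpos : 0 < R := rpos γ hγ s
    have hdpos : 0 < R ^ 2 - 4 * c := by
      have : c < R ^ 2 / 4 := by simpa [B] using hcB
      linarith
    set sd := Real.sqrt (R ^ 2 - 4 * c) with hsd
    have hsdsq : sd ^ 2 = R ^ 2 - 4 * c := Real.sq_sqrt hdpos.le
    have hsdpos : 0 < sd := Real.sqrt_pos.mpr hdpos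
    have hsdlt : sd < R := by nlinarith
    set c₁ := (R - sd) / 2 with hc₁
    set c₂ := (R + sd) / 2 with hc₂
    have hc₁pos : 0 < c₁ := by simp only [hc₁]; linarith
    have hc₂pos : 0 < c₂ := by simp only [hc₂]; linarith
    have hc₂ltR : c₂ < R := by simp only [hc₂]; linarith
    have hc₁ltR : c₁ < R := by simp only [hc₁]; linarith
    have hRleB : R ≤ B γ s := rleB γ hγ s
    have hsum : c₁ + c₂ = R := by simp only [hc₁, hc₂]; ring
    have hprod : c₁ * c₂ = c := by
      have : c₁ * c₂ = (R ^ 2 - sd ^ 2) / 4 := by simp only [hc₁, hc₂]; ring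
      rw [this, hsdsq]; ring
    have hfac : P γ (s + 1) + C c = (P γ s + C c₁) * (P γ s + C c₂) := by
      have h1 : C c = C c₁ * C c₂ := by rw [← C_mul, hprod]
      have h2 : C R = C c₁ + C c₂ := by rw [← C_add, hsum]
      show P γ s * (P γ s + C R) + C c = _
      rw [h1, h2]; ring
    have hroots : (P γ (s + 1) + C c).roots
        = (P γ s + C c₁).roots + (P γ s + C c₂).roots := by
      rw [hfac, roots_mul (mul_ne_zero (PCmonic γ s c₁).ne_zero (PCmonic γ s c₂).ne_zero)]
    rw [hroots, Multiset.map_add, Multiset.sum_add]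
    by_cases hs : s ∈ T
    · -- split off the factor P γ s
      set T' := T.erase s with hT'
      have hT'lt : ∀ j ∈ T', j < s := by
        intro j hj
        have h1 := Finset.ne_of_mem_erase hj
        have h2 := hT j (Finset.mem_of_mem_erase hj)
        omega
      have hfeq : ∀ x : ℝ, ∏ j ∈ T, (P γ j).eval x
          = (P γ s).eval x * ∏ j ∈ T', (P γ j).eval x := fun x =>
        (Finset.mul_prod_erase T _ hs).symm
      have hhalf : ∀ c' : ℝ, 0 < c' → c' < B γ s →
          (((P γ s + C c').roots.map (fun x => ∏ j ∈ T, (P γ j).eval x)).sum)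
            = -c' * (2 ^ s * ∏ j ∈ T', (-(r γ j) / 2)) := by
        intro c' hc' hc'B
        have heval : ∀ x ∈ (P γ s + C c').roots,
            (fun x => ∏ j ∈ T, (P γ j).eval x) x
              = (fun x => -c' * ∏ j ∈ T', (P γ j).eval x) x := by
          intro x hx
          have hr : (P γ s + C c').IsRoot x := isRoot_of_mem_roots hx
          have hev : (P γ s).eval x = -c' := by
            have := hr
            simp only [IsRoot, eval_add, eval_C] at this
            linarith
          simp only [hfeq x, hev]
        rw [Multiset.map_congr rfl heval, Multiset.sum_map_mul_left,
          ih T' hT'lt c' hc' hc'B]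
      rw [hhalf c₁ hc₁pos (lt_of_lt_of_le hc₁ltR hRleB),
        hhalf c₂ hc₂pos (lt_of_lt_of_le hc₂ltR hRleB)]
      have hprodT : ∏ j ∈ T, (-(r γ j) / 2)
          = (-R / 2) * ∏ j ∈ T', (-(r γ j) / 2) := (Finset.mul_prod_erase T _ hs).symm
      rw [hprodT, pow_succ]
      linear_combination (-(2:ℝ) ^ s * ∏ j ∈ T', (-(r γ j) / 2)) * hsum
    · -- s ∉ T
      have hTlt : ∀ j ∈ T, j < s := by
        intro j hj
        have := hT j hj
        have : j ≠ s := fun h => hs (h ▸ hj)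
        omega
      rw [ih T hTlt c₁ hc₁pos (lt_of_lt_of_le hc₁ltR hRleB),
        ih T hTlt c₂ hc₂pos (lt_of_lt_of_le hc₂ltR hRleB)]
      rw [pow_succ]; ring

theorem stmt_2 (γ : ℕ → ℝ) (hγ : ∀ s : ℕ, 0 < γ (s + 1) ∧ γ (s + 1) < 1 / 4)
    (n s : ℕ) (hn : 1 ≤ n) (i : Fin n → ℕ) (hmono : StrictMono i)
    (hlt : ∀ k : Fin n, i k < s) :
    nuInt γ s (fun x => ∏ k : Fin n, (P γ (i k)).eval x) =
      ∏ k : Fin n, nuInt γ s (fun x => (P γ (i k)).eval x) ∧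
    nuInt γ s (fun x => ∏ k : Fin n, (P γ (i k)).eval x) =
      (-1) ^ n * ∏ k : Fin n, (r γ (i k) / 2) := by
  have hspos : 0 < s := lt_of_le_of_lt (Nat.zero_le _) (hlt ⟨0, hn⟩)
  have hcpos : 0 < r γ s / 2 := by have := rpos γ hγ s; linarith
  have hcB : r γ s / 2 < B γ s := by
    obtain ⟨s', rfl⟩ : ∃ s', s = s' + 1 := ⟨s - 1, by omega⟩
    have h1 := (hγ s').2
    have h2 := rpos γ hγ s'
    have h3 := (hγ s').1
    simp only [r, B]
    nlinarith
  have hinj : Function.Injective i := hmono.injective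
  set T : Finset ℕ := Finset.univ.image i with hTdef
  have hTlt : ∀ j ∈ T, j < s := by
    intro j hj
    obtain ⟨k, _, rfl⟩ := Finset.mem_image.mp hj
    exact hlt k
  have hprodT : ∀ (f : ℕ → ℝ), ∏ j ∈ T, f j = ∏ k : Fin n, f (i k) := by
    intro f
    exact Finset.prod_image (fun a _ b _ h => hinj h)
  have h2s : (2 : ℝ) ^ s ≠ 0 := by positivity
  -- value of the product integral
  have hmain : nuInt γ s (fun x => ∏ k : Fin n, (P γ (i k)).eval x)
      = ∏ j ∈ T, (-(r γ j) / 2) := by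
    have hfun : (fun x : ℝ => ∏ k : Fin n, (P γ (i k)).eval x)
        = fun x => ∏ j ∈ T, (P γ j).eval x := by
      funext x
      exact (hprodT (fun j => (P γ j).eval x)).symm
    rw [nuInt, hfun, key γ hγ s T hTlt _ hcpos hcB]
    field_simp
  have hsingle : ∀ k : Fin n, nuInt γ s (fun x => (P γ (i k)).eval x)
      = -(r γ (i k)) / 2 := by
    intro k
    have hfun : (fun x : ℝ => (P γ (i k)).eval x)
        = fun x => ∏ j ∈ ({i k} : Finset ℕ), (P γ j).eval x := by
      funext x; simp
    rw [nuInt, hfun, key γ hγ s {i k} (by simpa using hlt k) _ hcpos hcB]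
    field_simp
    rw [Finset.prod_singleton]
    ring
  have hfinal : ∏ j ∈ T, (-(r γ j) / 2) = (-1) ^ n * ∏ k : Fin n, (r γ (i k) / 2) := by
    rw [hprodT]
    have : ∀ k : Fin n, -(r γ (i k)) / 2 = (-1) * (r γ (i k) / 2) := fun k => by ring
    rw [Finset.prod_congr rfl (fun k _ => this k), Finset.prod_mul_distrib,
      Finset.prod_const, Finset.card_univ, Fintype.card_fin]
  refine ⟨?_, hmain.trans hfinal⟩
  rw [hmain, Finset.prod_congr rfl (fun k (_ : k ∈ Finset.univ) => hsingle k), hprodT]
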